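/- Let H be a separable Hilbert space with orthonormal basis (e_j)_{j∈ℤ}, and let W₁, W₂ be the operators defined by W₁(e_n) = 2e_{n+1} for n < 0, W₁(e_n) = (1/2)e_{n+1} for n ≥ 0, and W₂(e_n) = 3e_{n+1} for n < 0, W₂(e_n) = (1/3)e_{n+1} for n ≥ 0. Then for every m ∈ ℕ, ‖W₁^{k} W₂^{-2k} P_m‖ → 0 and ‖W₂^{2k} W₁^{-k} P_m‖ → 0 as k → ∞, where P_m is the orthogonal projection onto span{e_{-m},...,e_m}. -/

import Mathlib

open Filter Topology Finset

set_option linter.unusedSectionVars false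



section aux
variable {H : Type*} [NormedAddCommGroup H] [InnerProductSpace ℂ H] [CompleteSpace H]
  (e : HilbertBasis ℤ ℂ H)

lemma aux_pow_up (W : H →L[ℂ] H) (c : ℤ → ℂ)
    (h : ∀ n, W (e n) = c n • e (n + 1)) : ∀ (k : ℕ) (n : ℤ),
    (W ^ k) (e n) = (∏ i ∈ Finset.range k, c (n + i)) • e (n + k) := by
  intro k
  induction k with
  | zero => intro n; simp
  | succ k ih =>
    intro n
    rw [pow_succ, ContinuousLinearMap.mul_apply, h n, map_smul, ih (n+1),
      smul_smul, Finset.prod_range_succ']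
    congr 1
    · rw [mul_comm]
      congr 1
      · apply Finset.prod_congr rfl
        intro i _
        congr 1
        push_cast
        ring
      · simp
    · congr 1
      push_cast
      ring

lemma aux_inv (W Winv : H →L[ℂ] H) (c : ℤ → ℂ) (hc : ∀ n, c n ≠ 0)
    (h : ∀ n, W (e n) = c n • e (n + 1)) (hWi : Winv * W = 1) (n : ℤ) :
    Winv (e n) = (c (n - 1))⁻¹ • e (n - 1) := by
  have h1 : Winv (W (e (n - 1))) = e (n - 1) := by
    have := congrArg (fun T : H →L[ℂ] H => T (e (n - 1))) hWi
    simpa using this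
  rw [h (n - 1), map_smul] at h1
  have h2 : c (n - 1) • Winv (e n) = e (n - 1) := by
    simpa using h1
  rw [← h2, inv_smul_smul₀ (hc _)]

lemma aux_pow_down (Winv : H →L[ℂ] H) (d : ℤ → ℂ)
    (h : ∀ n, Winv (e n) = d n • e (n - 1)) : ∀ (s : ℕ) (n : ℤ),
    (Winv ^ s) (e n) = (∏ i ∈ Finset.range s, d (n - i)) • e (n - s) := by
  intro s
  induction s with
  | zero => intro n; simp
  | succ s ih =>
    intro n
    rw [pow_succ, ContinuousLinearMap.mul_apply, h n, map_smul, ih (n-1),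
      smul_smul, Finset.prod_range_succ']
    congr 1
    · rw [mul_comm]
      congr 1
      · apply Finset.prod_congr rfl
        intro i _
        congr 1
        push_cast
        ring
      · simp
    · congr 1
      push_cast
      ring

end aux




section aux2
variable {H : Type*} [NormedAddCommGroup H] [InnerProductSpace ℂ H] [CompleteSpace H]
  (e : HilbertBasis ℤ ℂ H)

lemma aux_opnorm (A Pm : H →L[ℂ] H) (m : ℕ) (C : ℝ) (hC : 0 ≤ C)
    (hP₁ : ∀ j : ℤ, |j| ≤ (m : ℤ) → Pm (e j) = e j)
    (hP₂ : ∀ j : ℤ, (m : ℤ) < |j| → Pm (e j) = 0)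
    (hA : ∀ j : ℤ, |j| ≤ (m : ℤ) → ‖A (e j)‖ ≤ C) :
    ‖A * Pm‖ ≤ (2 * m + 1) * C := by
  apply ContinuousLinearMap.opNorm_le_bound
  · positivity
  intro x
  set s : Finset ℤ := Finset.Icc (-(m : ℤ)) m with hs
  have hsum : HasSum (fun i : ℤ => e.repr x i • (A * Pm) (e i)) ((A * Pm) x) := by
    have h0 : HasSum (fun i : ℤ => e.repr x i • e i) x := e.hasSum_repr x
    have h1 := h0.mapL (A * Pm)
    simpa [map_smul] using h1
  have hzero : ∀ i ∉ s, e.repr x i • (A * Pm) (e i) = 0 := by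
    intro i hi
    have hm : (m : ℤ) < |i| := by
      simp only [hs, Finset.mem_Icc, not_and_or, not_le] at hi
      rcases abs_cases i with ⟨h1, h2⟩ | ⟨h1, h2⟩ <;> omega
    simp [ContinuousLinearMap.mul_apply, hP₂ i hm]
  have heq : (A * Pm) x = ∑ i ∈ s, e.repr x i • (A * Pm) (e i) :=
    hsum.unique (hasSum_sum_of_ne_finset_zero hzero)
  rw [heq]
  have hcard : (s.card : ℝ) = 2 * m + 1 := by
    rw [hs, Int.card_Icc]
    have h2 : ((m : ℤ) + 1 - (-(m : ℤ))).toNat = 2 * m + 1 := by omega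
    rw [h2]
    push_cast
    ring
  calc ‖∑ i ∈ s, e.repr x i • (A * Pm) (e i)‖
      ≤ ∑ i ∈ s, ‖e.repr x i • (A * Pm) (e i)‖ := norm_sum_le _ _
    _ ≤ ∑ i ∈ s, C * ‖x‖ := by
        apply Finset.sum_le_sum
        intro i hi
        have him : |i| ≤ (m : ℤ) := by
          simp only [hs, Finset.mem_Icc] at hi
          rcases abs_cases i with ⟨h1, h2⟩ | ⟨h1, h2⟩ <;> omega
        rw [norm_smul, ContinuousLinearMap.mul_apply, hP₁ i him, mul_comm C]
        have h1 : ‖e.repr x i‖ ≤ ‖x‖ := by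
          have := lp.norm_apply_le_norm (by norm_num : (2 : ENNReal) ≠ 0) (e.repr x) i
          simpa using this
        exact mul_le_mul h1 (hA i him) (norm_nonneg _) (norm_nonneg _)
    _ = s.card * (C * ‖x‖) := by rw [Finset.sum_const, nsmul_eq_mul]
    _ = (2 * m + 1) * C * ‖x‖ := by rw [hcard]; ring

end aux2

lemma prod_weight_lower (a : ℝ) (ha : 1 ≤ a) (j : ℤ) (m s : ℕ) (hj : |j| ≤ (m : ℤ)) :
    a ^ s * ((a * a)⁻¹) ^ m ≤ ∏ i ∈ Finset.range s, (if j - 1 - (i : ℤ) < 0 then a else a⁻¹) := by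
  have ha0 : (0 : ℝ) < a := lt_of_lt_of_le one_pos ha
  have hstep : ∀ i : ℕ, (if j - 1 - (i : ℤ) < 0 then a else a⁻¹)
      = a * (if j - 1 - (i : ℤ) < 0 then 1 else (a * a)⁻¹) := by
    intro i
    split_ifs
    · ring
    · field_simp
  have heq : ∏ i ∈ Finset.range s, (if j - 1 - (i : ℤ) < 0 then a else a⁻¹)
      = a ^ s * ∏ i ∈ Finset.range s, (if j - 1 - (i : ℤ) < 0 then 1 else (a * a)⁻¹) := by
    rw [show (a : ℝ) ^ s = ∏ _i ∈ Finset.range s, a by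
      rw [Finset.prod_const, Finset.card_range], ← Finset.prod_mul_distrib]
    exact Finset.prod_congr rfl fun i _ => hstep i
  rw [heq]
  apply mul_le_mul_of_nonneg_left _ (by positivity)
  rw [Finset.prod_ite, Finset.prod_const_one, one_mul, Finset.prod_const]
  have hNm : ((Finset.range s).filter (fun i : ℕ => ¬ (j - 1 - (i : ℤ) < 0))).card ≤ m := by
    have hsub : ((Finset.range s).filter (fun i : ℕ => ¬ (j - 1 - (i : ℤ) < 0)))
        ⊆ Finset.range m := by
      intro i hi
      simp only [Finset.mem_filter, Finset.mem_range, not_lt] at hi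
      have h2 : (i : ℤ) < m := by
        rcases abs_cases j with ⟨h3, h4⟩ | ⟨h3, h4⟩ <;> omega
      rw [Finset.mem_range]
      exact_mod_cast h2
    simpa using Finset.card_le_card hsub
  apply pow_le_pow_of_le_one (by positivity) _ hNm
  rw [inv_le_one_iff₀]
  right
  nlinarith

lemma prod_weight_upper (j : ℤ) (m k : ℕ) (hj : |j| ≤ (m : ℤ)) (hk : m < k) :
    ∏ i ∈ Finset.range (2 * k), (if j - k + (i : ℤ) < 0 then (3 : ℝ) else 3⁻¹) ≤ 9 ^ m := by
  have hstep : ∀ i : ℕ, (if j - k + (i : ℤ) < 0 then (3 : ℝ) else 3⁻¹)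
      = 3 * (if j - k + (i : ℤ) < 0 then 1 else 9⁻¹) := by
    intro i; split_ifs <;> norm_num
  have heq : ∏ i ∈ Finset.range (2 * k), (if j - k + (i : ℤ) < 0 then (3 : ℝ) else 3⁻¹)
      = 3 ^ (2 * k) * ∏ i ∈ Finset.range (2 * k), (if j - k + (i : ℤ) < 0 then 1 else (9 : ℝ)⁻¹) := by
    rw [show (3 : ℝ) ^ (2 * k) = ∏ _i ∈ Finset.range (2 * k), (3 : ℝ) by
      rw [Finset.prod_const, Finset.card_range], ← Finset.prod_mul_distrib]
    exact Finset.prod_congr rfl fun i _ => hstep i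
  rw [heq, Finset.prod_ite, Finset.prod_const_one, one_mul, Finset.prod_const]
  set N := ((Finset.range (2 * k)).filter (fun i : ℕ => ¬ (j - (k : ℤ) + (i : ℤ) < 0))).card with hN
  have hNk : k - m ≤ N := by
    have hsub : Finset.Ico (k + m) (2 * k) ⊆
        ((Finset.range (2 * k)).filter (fun i : ℕ => ¬ (j - (k : ℤ) + (i : ℤ) < 0))) := by
      intro i hi
      simp only [Finset.mem_Ico] at hi
      simp only [Finset.mem_filter, Finset.mem_range, not_lt]
      refine ⟨hi.2, ?_⟩
      have h3 : (k : ℤ) + m ≤ i := by exact_mod_cast hi.1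
      rcases abs_cases j with ⟨h4, h5⟩ | ⟨h4, h5⟩ <;> omega
    have hcc := Finset.card_le_card hsub
    rw [Nat.card_Ico] at hcc
    omega
  have h1 : ((9 : ℝ)⁻¹) ^ N ≤ ((9 : ℝ)⁻¹) ^ (k - m) :=
    pow_le_pow_of_le_one (by norm_num) (by norm_num) hNk
  calc (3 : ℝ) ^ (2 * k) * ((9 : ℝ)⁻¹) ^ N
      ≤ (3 : ℝ) ^ (2 * k) * ((9 : ℝ)⁻¹) ^ (k - m) :=
        mul_le_mul_of_nonneg_left h1 (by positivity)
    _ = 9 ^ k * ((9 : ℝ)⁻¹) ^ (k - m) := by rw [pow_mul]; norm_num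
    _ = 9 ^ m := by
        have h2 : (9 : ℝ) ^ k = 9 ^ m * 9 ^ (k - m) := by
          rw [← pow_add]
          congr 1
          omega
        rw [h2, mul_assoc, ← mul_pow]
        norm_num



noncomputable def cc (a : ℂ) (n : ℤ) : ℂ := if n < 0 then a else a⁻¹

lemma cc_ne_zero (a : ℂ) (ha : a ≠ 0) (n : ℤ) : cc a n ≠ 0 := by
  unfold cc; split_ifs
  · exact ha
  · exact inv_ne_zero ha

lemma norm_cc2 (n : ℤ) : ‖cc 2 n‖ = if n < 0 then (2 : ℝ) else 2⁻¹ := by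
  unfold cc; split_ifs <;> simp

lemma norm_cc3 (n : ℤ) : ‖cc 3 n‖ = if n < 0 then (3 : ℝ) else 3⁻¹ := by
  unfold cc; split_ifs <;> simp


theorem stmt8
    {H : Type*} [NormedAddCommGroup H] [InnerProductSpace ℂ H] [CompleteSpace H]
    [TopologicalSpace.SeparableSpace H]
    (e : HilbertBasis ℤ ℂ H)
    (W₁ W₂ W₁inv W₂inv : H →L[ℂ] H)
    (hW₁ : ∀ n : ℤ, W₁ (e n) = if n < 0 then (2 : ℂ) • e (n + 1) else ((2 : ℂ)⁻¹) • e (n + 1))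
    (hW₂ : ∀ n : ℤ, W₂ (e n) = if n < 0 then (3 : ℂ) • e (n + 1) else ((3 : ℂ)⁻¹) • e (n + 1))
    (hinv₁ : W₁ * W₁inv = 1 ∧ W₁inv * W₁ = 1)
    (hinv₂ : W₂ * W₂inv = 1 ∧ W₂inv * W₂ = 1)
    (P : ℕ → (H →L[ℂ] H))
    (hP₁ : ∀ (m : ℕ) (j : ℤ), |j| ≤ (m : ℤ) → P m (e j) = e j)
    (hP₂ : ∀ (m : ℕ) (j : ℤ), (m : ℤ) < |j| → P m (e j) = 0) :
    ∀ m : ℕ,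
      Tendsto (fun k : ℕ => ‖W₁ ^ k * W₂inv ^ (2 * k) * P m‖) atTop (𝓝 0) ∧
      Tendsto (fun k : ℕ => ‖W₂ ^ (2 * k) * W₁inv ^ k * P m‖) atTop (𝓝 0) := by
  intro m
  have hW₁' : ∀ n : ℤ, W₁ (e n) = cc 2 n • e (n + 1) := by
    intro n; rw [hW₁ n]; unfold cc; split_ifs <;> rfl
  have hW₂' : ∀ n : ℤ, W₂ (e n) = cc 3 n • e (n + 1) := by
    intro n; rw [hW₂ n]; unfold cc; split_ifs <;> rfl
  have hW₁inv : ∀ n : ℤ, W₁inv (e n) = (cc 2 (n - 1))⁻¹ • e (n - 1) :=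
    aux_inv e W₁ W₁inv (cc 2) (cc_ne_zero 2 (by norm_num)) hW₁' hinv₁.2
  have hW₂inv : ∀ n : ℤ, W₂inv (e n) = (cc 3 (n - 1))⁻¹ • e (n - 1) :=
    aux_inv e W₂ W₂inv (cc 3) (cc_ne_zero 3 (by norm_num)) hW₂' hinv₂.2
  have norme : ∀ n : ℤ, ‖e n‖ = 1 := fun n => e.orthonormal.1 n
  -- key bound 1
  have key₁ : ∀ (k : ℕ) (j : ℤ), |j| ≤ (m : ℤ) →
      ‖(W₁ ^ k * W₂inv ^ (2 * k)) (e j)‖ ≤ 9 ^ m * (2 / 9) ^ k := by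
    intro k j hj
    rw [ContinuousLinearMap.mul_apply,
      aux_pow_down e W₂inv (fun n => (cc 3 (n - 1))⁻¹) hW₂inv (2 * k) j,
      map_smul, aux_pow_up e W₁ (cc 2) hW₁' k (j - (2 * k : ℕ)),
      norm_smul, norm_smul, norme, mul_one]
    have e1 : ‖∏ i ∈ Finset.range (2 * k), (cc 3 (j - (i : ℤ) - 1))⁻¹‖
        = (∏ i ∈ Finset.range (2 * k), (if j - 1 - (i : ℤ) < 0 then (3 : ℝ) else 3⁻¹))⁻¹ := by
      rw [norm_prod, ← Finset.prod_inv_distrib]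
      apply Finset.prod_congr rfl
      intro i _
      rw [norm_inv, norm_cc3]
      have : j - (i : ℤ) - 1 = j - 1 - i := by ring
      rw [this]
    have e2 : ‖∏ i ∈ Finset.range k, cc 2 (j - (2 * k : ℕ) + (i : ℤ))‖ ≤ 2 ^ k := by
      rw [norm_prod]
      calc ∏ i ∈ Finset.range k, ‖cc 2 (j - (2 * k : ℕ) + (i : ℤ))‖
          ≤ ∏ _i ∈ Finset.range k, (2 : ℝ) := by
            apply Finset.prod_le_prod
            · intro i _; exact norm_nonneg _
            · intro i _
              rw [norm_cc2]
              split_ifs <;> norm_num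
        _ = 2 ^ k := by rw [Finset.prod_const, Finset.card_range]
    rw [e1]
    have hlow := prod_weight_lower 3 (by norm_num) j m (2 * k) hj
    have hpos : (0 : ℝ) < 3 ^ (2 * k) * ((3 * 3 : ℝ)⁻¹) ^ m := by positivity
    calc (∏ i ∈ Finset.range (2 * k), (if j - 1 - (i : ℤ) < 0 then (3 : ℝ) else 3⁻¹))⁻¹
          * ‖∏ i ∈ Finset.range k, cc 2 (j - (2 * k : ℕ) + (i : ℤ))‖
        ≤ ((3 : ℝ) ^ (2 * k) * ((3 * 3 : ℝ)⁻¹) ^ m)⁻¹ * 2 ^ k := by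
          apply mul_le_mul _ e2 (norm_nonneg _) (by positivity)
          exact inv_anti₀ hpos hlow
      _ = 9 ^ m * (2 / 9) ^ k := by
          rw [pow_mul, div_pow]
          norm_num
          field_simp
          rw [one_div, inv_pow, inv_mul_cancel₀ (by positivity)]
  -- key bound 2
  have key₂ : ∀ (k : ℕ), m < k → ∀ (j : ℤ), |j| ≤ (m : ℤ) →
      ‖(W₂ ^ (2 * k) * W₁inv ^ k) (e j)‖ ≤ 9 ^ m * 4 ^ m * (2⁻¹ : ℝ) ^ k := by
    intro k hk j hj
    rw [ContinuousLinearMap.mul_apply,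
      aux_pow_down e W₁inv (fun n => (cc 2 (n - 1))⁻¹) hW₁inv k j,
      map_smul, aux_pow_up e W₂ (cc 3) hW₂' (2 * k) (j - (k : ℕ)),
      norm_smul, norm_smul, norme, mul_one]
    have e1 : ‖∏ i ∈ Finset.range k, (cc 2 (j - (i : ℤ) - 1))⁻¹‖
        = (∏ i ∈ Finset.range k, (if j - 1 - (i : ℤ) < 0 then (2 : ℝ) else 2⁻¹))⁻¹ := by
      rw [norm_prod, ← Finset.prod_inv_distrib]
      apply Finset.prod_congr rfl
      intro i _
      rw [norm_inv, norm_cc2]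
      have : j - (i : ℤ) - 1 = j - 1 - i := by ring
      rw [this]
    have e2 : ‖∏ i ∈ Finset.range (2 * k), cc 3 (j - (k : ℕ) + (i : ℤ))‖ ≤ 9 ^ m := by
      rw [norm_prod]
      have := prod_weight_upper j m k hj hk
      calc ∏ i ∈ Finset.range (2 * k), ‖cc 3 (j - (k : ℕ) + (i : ℤ))‖
          = ∏ i ∈ Finset.range (2 * k), (if j - (k : ℤ) + (i : ℤ) < 0 then (3 : ℝ) else 3⁻¹) := by
            apply Finset.prod_congr rfl
            intro i _
            rw [norm_cc3]
        _ ≤ 9 ^ m := this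
    rw [e1]
    have hlow := prod_weight_lower 2 (by norm_num) j m k hj
    have hpos : (0 : ℝ) < 2 ^ k * ((2 * 2 : ℝ)⁻¹) ^ m := by positivity
    calc (∏ i ∈ Finset.range k, (if j - 1 - (i : ℤ) < 0 then (2 : ℝ) else 2⁻¹))⁻¹
          * ‖∏ i ∈ Finset.range (2 * k), cc 3 (j - (k : ℕ) + (i : ℤ))‖
        ≤ ((2 : ℝ) ^ k * ((2 * 2 : ℝ)⁻¹) ^ m)⁻¹ * 9 ^ m := by
          apply mul_le_mul _ e2 (norm_nonneg _) (by positivity)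
          exact inv_anti₀ hpos hlow
      _ = 9 ^ m * 4 ^ m * (2⁻¹ : ℝ) ^ k := by
          field_simp
          ring
          rw [one_div, one_div, inv_pow, inv_pow, mul_assoc ((4:ℝ)^m)⁻¹, inv_mul_cancel₀ (by positivity), mul_one, inv_mul_cancel₀ (by positivity)]
  -- operator norm bounds
  have hOp₁ : ∀ k : ℕ, ‖W₁ ^ k * W₂inv ^ (2 * k) * P m‖
      ≤ (2 * m + 1) * (9 ^ m * (2 / 9) ^ k) := by
    intro k
    exact aux_opnorm e _ (P m) m _ (by positivity) (hP₁ m) (hP₂ m) (fun j hj => key₁ k j hj)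
  have hOp₂ : ∀ k : ℕ, m < k → ‖W₂ ^ (2 * k) * W₁inv ^ k * P m‖
      ≤ (2 * m + 1) * (9 ^ m * 4 ^ m * (2⁻¹ : ℝ) ^ k) := by
    intro k hk
    exact aux_opnorm e _ (P m) m _ (by positivity) (hP₁ m) (hP₂ m) (fun j hj => key₂ k hk j hj)
  constructor
  · apply squeeze_zero (fun k => norm_nonneg _) hOp₁
    have h0 : Tendsto (fun k : ℕ => ((2 : ℝ) / 9) ^ k) atTop (𝓝 0) :=
      tendsto_pow_atTop_nhds_zero_of_lt_one (by norm_num) (by norm_num)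
    have h1 := (h0.const_mul ((9 : ℝ) ^ m)).const_mul ((2 * m + 1 : ℝ))
    simpa using h1
  · refine squeeze_zero' (g := fun k : ℕ => (2 * (m : ℝ) + 1) * (9 ^ m * 4 ^ m * (2⁻¹ : ℝ) ^ k))
      (Eventually.of_forall fun k => norm_nonneg _) ?_ ?_
    · filter_upwards [eventually_gt_atTop m] with k hk
      exact hOp₂ k hk
    · have h0 : Tendsto (fun k : ℕ => ((2 : ℝ)⁻¹) ^ k) atTop (𝓝 0) :=
        tendsto_pow_atTop_nhds_zero_of_lt_one (by norm_num) (by norm_num)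
      have h1 := (h0.const_mul ((9 : ℝ) ^ m * 4 ^ m)).const_mul ((2 * m + 1 : ℝ))
      simpa [mul_assoc] using h1
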